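/- For v ∈ V nonzero, let B_v be the distribution on L(V,W) of w⊗φ where w is uniform in W and φ is uniform among functionals in V* with φ(v)=1 (identifying W⊗V* with L(V,W)). Then for any f ∈ L²(L(V,W)) and A ∈ L(V,W), E_v(f)(A) = E_{B∼B_v}[f(A+B)], where E_v is the average of e_{V/V'} over codimension-one V' not containing v. -/

import Mathlib

open scoped Classical
open LinearMap

variable {F V W : Type} [Field F] [Fintype F]
  [AddCommGroup V] [Module F V] [Fintype V]
  [AddCommGroup W] [Module F W] [Fintype W]

/-- The averaging operator `e_{V/V'}` on `L²(L(V,W))`. -/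
noncomputable def eAvg [Fintype (V →ₗ[F] W)] (V' : Submodule F V)
    (f : (V →ₗ[F] W) → ℂ) (A : V →ₗ[F] W) : ℂ :=
  (∑ B ∈ Finset.univ.filter (fun B : V →ₗ[F] W => ∀ v ∈ V', B v = 0), f (A + B)) /
    ((Finset.univ.filter (fun B : V →ₗ[F] W => ∀ v ∈ V', B v = 0)).card : ℂ)

set_option linter.unusedSectionVars false

section aux
variable (v : V)

lemma aux_ext (ψ : Module.Dual F V) (hψ : ψ v = 1) (B : V →ₗ[F] W)
    (hB : ∀ x ∈ LinearMap.ker ψ, B x = 0) : B = ψ.smulRight (B v) := by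
  ext x
  have hx : x - ψ x • v ∈ LinearMap.ker ψ := by
    simp [LinearMap.mem_ker, map_sub, map_smul, hψ]
  have h0 := hB _ hx
  rw [map_sub, map_smul, sub_eq_zero] at h0
  simpa using h0

lemma aux_ker_inj (ψ₁ ψ₂ : Module.Dual F V) (h1 : ψ₁ v = 1) (h2 : ψ₂ v = 1)
    (hk : LinearMap.ker ψ₁ = LinearMap.ker ψ₂) : ψ₁ = ψ₂ := by
  have := aux_ext v ψ₂ h2 ψ₁ (fun x hx => by rw [← hk] at hx; exact hx)
  rw [this]; ext x; simp [h1]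

lemma aux_finrank (ψ : Module.Dual F V) (hψ : ψ v = 1) :
    Module.finrank F (LinearMap.ker ψ) + 1 = Module.finrank F V := by
  have : Module.Finite F V := Module.Finite.of_finite
  have hsurj : Function.Surjective ψ := fun c => ⟨c • v, by simp [hψ]⟩
  have hrange : LinearMap.range ψ = ⊤ := LinearMap.range_eq_top.2 hsurj
  have h := LinearMap.finrank_range_add_finrank_ker ψ
  rw [hrange, finrank_top, Module.finrank_self] at h
  omega

lemma aux_surj (hv : v ≠ 0) (V' : Submodule F V)
    (hr : Module.finrank F V' + 1 = Module.finrank F V) (hvV : v ∉ V') :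
    ∃ ψ : Module.Dual F V, ψ v = 1 ∧ LinearMap.ker ψ = V' := by
  have : Module.Finite F V := Module.Finite.of_finite
  have hdisj : Disjoint V' (F ∙ v) :=
    (Submodule.disjoint_span_singleton' hv).2 hvV
  have hspan : Module.finrank F (F ∙ v) = 1 := finrank_span_singleton hv
  have hcod : Codisjoint V' (F ∙ v) := by
    rw [codisjoint_iff]
    apply Submodule.eq_top_of_finrank_eq
    have := Submodule.finrank_sup_add_finrank_inf_eq V' (F ∙ v)
    rw [hdisj.eq_bot, finrank_bot, add_zero, hspan] at this
    omega
  have hc : IsCompl (F ∙ v) V' := ⟨hdisj.symm, hcod.symm⟩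
  refine ⟨(LinearEquiv.coord F V v hv : (F ∙ v) →ₗ[F] F).comp
      (Submodule.projectionOnto (F ∙ v) V' hc), ?_, ?_⟩
  · have : Submodule.projectionOnto (F ∙ v) V' hc v =
        ⟨v, Submodule.mem_span_singleton_self v⟩ :=
      Submodule.linearProjOfIsCompl_apply_left hc ⟨v, Submodule.mem_span_singleton_self v⟩
    simp [LinearMap.comp_apply, this, LinearEquiv.coord_self]
  · rw [LinearMap.ker_comp, LinearEquiv.ker, Submodule.comap_bot,
      Submodule.linearProjOfIsCompl_ker]

lemma aux_eAvg [Fintype (V →ₗ[F] W)] (ψ : Module.Dual F V) (hψ : ψ v = 1)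
    (f : (V →ₗ[F] W) → ℂ) (A : V →ₗ[F] W) :
    eAvg (LinearMap.ker ψ) f A =
      (∑ w : W, f (A + ψ.smulRight w)) / (Fintype.card W : ℂ) := by
  have key : ∀ w : W, ψ.smulRight w ∈
      Finset.univ.filter (fun B : V →ₗ[F] W => ∀ x ∈ LinearMap.ker ψ, B x = 0) := by
    intro w
    simp only [Finset.mem_filter, Finset.mem_univ, true_and]
    intro x hx
    simp [LinearMap.mem_ker.1 hx]
  have hsum : (∑ B ∈ Finset.univ.filter
        (fun B : V →ₗ[F] W => ∀ x ∈ LinearMap.ker ψ, B x = 0), f (A + B)) =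
      ∑ w : W, f (A + ψ.smulRight w) := by
    refine Finset.sum_nbij' (fun B => B v) (fun w => ψ.smulRight w) ?_ ?_ ?_ ?_ ?_
    · intro B _; exact Finset.mem_univ _
    · intro w _; exact key w
    · intro B hB
      simp only [Finset.mem_filter, Finset.mem_univ, true_and] at hB
      exact (aux_ext v ψ hψ B hB).symm
    · intro w _; simp [hψ]
    · intro B hB
      simp only [Finset.mem_filter, Finset.mem_univ, true_and] at hB
      rw [← aux_ext v ψ hψ B hB]
  have hcard : ((Finset.univ.filter
        (fun B : V →ₗ[F] W => ∀ x ∈ LinearMap.ker ψ, B x = 0)).card : ℂ) =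
      (Fintype.card W : ℂ) := by
    norm_cast
    rw [← Finset.card_univ]
    refine Finset.card_nbij' (fun B => B v) (fun w => ψ.smulRight w) ?_ ?_ ?_ ?_
    · intro B _; exact Finset.mem_univ _
    · intro w _; exact key w
    · intro B hB
      simp only [Finset.coe_filter, Finset.mem_coe, Finset.mem_filter, Finset.mem_univ, true_and, Set.mem_setOf_eq] at hB
      exact (aux_ext v ψ hψ B hB).symm
    · intro w _; simp [hψ]
  rw [eAvg, hsum, hcard]

end aux

theorem stmt_6 [Fintype (V →ₗ[F] W)] [Fintype (Submodule F V)]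
    [Fintype (Module.Dual F V)]
    (v : V) (hv : v ≠ 0) (f : (V →ₗ[F] W) → ℂ) (A : V →ₗ[F] W) :
    (∑ V' ∈ Finset.univ.filter
          (fun V' : Submodule F V =>
            Module.finrank F V' + 1 = Module.finrank F V ∧ v ∉ V'),
        eAvg V' f A) /
        ((Finset.univ.filter
          (fun V' : Submodule F V =>
            Module.finrank F V' + 1 = Module.finrank F V ∧ v ∉ V')).card : ℂ) =
      (∑ w : W, ∑ ψ ∈ Finset.univ.filter (fun ψ : Module.Dual F V => ψ v = 1),
          f (A + ψ.smulRight w)) /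
        ((Fintype.card W : ℂ) *
          ((Finset.univ.filter (fun ψ : Module.Dual F V => ψ v = 1)).card : ℂ)) := by
  set SV := Finset.univ.filter
      (fun V' : Submodule F V =>
        Module.finrank F V' + 1 = Module.finrank F V ∧ v ∉ V') with hSV
  set Sψ := Finset.univ.filter (fun ψ : Module.Dual F V => ψ v = 1) with hSψ
  have hmaps : ∀ ψ ∈ Sψ, LinearMap.ker ψ ∈ SV := by
    intro ψ hψ
    rw [hSψ, Finset.mem_filter] at hψ
    rw [hSV, Finset.mem_filter]
    refine ⟨Finset.mem_univ _, aux_finrank v ψ hψ.2, ?_⟩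
    intro hmem
    rw [LinearMap.mem_ker] at hmem
    rw [hmem] at hψ
    exact one_ne_zero hψ.2.symm
  have hinj : ∀ ψ₁ ∈ Sψ, ∀ ψ₂ ∈ Sψ,
      LinearMap.ker ψ₁ = LinearMap.ker ψ₂ → ψ₁ = ψ₂ := by
    intro ψ₁ h1 ψ₂ h2 hk
    rw [hSψ, Finset.mem_filter] at h1 h2
    exact aux_ker_inj v ψ₁ ψ₂ h1.2 h2.2 hk
  have hsurj : ∀ V' ∈ SV, ∃ ψ, ∃ _ : ψ ∈ Sψ, LinearMap.ker ψ = V' := by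
    intro V' hV'
    rw [hSV, Finset.mem_filter] at hV'
    obtain ⟨ψ, hψ1, hψ2⟩ := aux_surj v hv V' hV'.2.1 hV'.2.2
    exact ⟨ψ, by rw [hSψ, Finset.mem_filter]; exact ⟨Finset.mem_univ _, hψ1⟩, hψ2⟩
  have hsum : (∑ V' ∈ SV, eAvg V' f A) =
      ∑ ψ ∈ Sψ, (∑ w : W, f (A + ψ.smulRight w)) / (Fintype.card W : ℂ) := by
    refine (Finset.sum_bij (fun ψ _ => LinearMap.ker ψ) hmaps hinj hsurj ?_).symm
    intro ψ hψ
    rw [hSψ, Finset.mem_filter] at hψ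
    exact (aux_eAvg v ψ hψ.2 f A).symm
  have hcard : (SV.card : ℂ) = (Sψ.card : ℂ) := by
    norm_cast
    exact (Finset.card_bij (fun ψ _ => LinearMap.ker ψ) hmaps hinj hsurj).symm
  rw [hsum, hcard, ← Finset.sum_div, Finset.sum_comm, div_div, mul_comm]
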